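/- For the threshold fitness function s_i = 1 if i < K and 0 otherwise, the distribution p_i = δ(i, K-1) (all mass on K-1 mutations) is a stationary distribution of the asexual mutation-selection dynamics, and at this stationary distribution the fraction of offspring surviving selection is Z = e^{-μ}. -/

import Mathlib

/-- The Poisson probability of `k` new mutations, with mean `μ`. -/
noncomputable def pois (μ : ℝ) (k : ℕ) : ℝ := μ ^ k * Real.exp (-μ) / (Nat.factorial k)

/-- For the threshold fitness function `s i = 1` if `i < K` and `0` otherwise, the
distribution `p i = δ(i, K-1)` is stationary for the asexual mutation-selection
dynamics `q i = ∑_{j ≤ i} p j · Pois_μ(i - j)`, `p' i = s i q i / Z`, and at this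
stationary distribution the surviving fraction is `Z = e^{-μ}`. -/
theorem asexual_threshold_stationary (K : ℕ) (hK : 1 ≤ K) (μ : ℝ) (hμ : 0 < μ)
    (s p q : ℕ → ℝ) (Z : ℝ)
    (hs : ∀ i, s i = if i < K then (1 : ℝ) else 0)
    (hp : ∀ i, p i = if i = K - 1 then (1 : ℝ) else 0)
    (hq : ∀ i, q i = ∑ j ∈ Finset.range (i + 1), p j * pois μ (i - j))
    (hZ : Z = ∑' i, s i * q i) :
    Z = Real.exp (-μ) ∧ ∀ i, s i * q i / Z = p i := by
  have key : ∀ i, s i * q i = if i = K - 1 then Real.exp (-μ) else 0 := by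
    intro i
    rcases eq_or_ne i (K - 1) with h | h
    · subst h
      rw [hs, if_pos (by omega), hq, one_mul,
        Finset.sum_eq_single (K - 1)]
      · rw [hp, if_pos rfl, one_mul, Nat.sub_self, pois]
        simp
      · intro j hj hne
        rw [hp, if_neg hne, zero_mul]
      · intro h; exact absurd (Finset.self_mem_range_succ _) h
    · rw [if_neg h, hs]
      rcases lt_or_ge i K with hi | hi
      · rw [if_pos hi, one_mul, hq]
        apply Finset.sum_eq_zero
        intro j hj
        have : j ≠ K - 1 := by
          simp only [Finset.mem_range] at hj; omega
        rw [hp, if_neg this, zero_mul]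
      · rw [if_neg (by omega), zero_mul]
  have hZ' : Z = Real.exp (-μ) := by
    rw [hZ]
    simp_rw [key]
    exact tsum_ite_eq (K - 1) (fun _ => Real.exp (-μ))
  refine ⟨hZ', fun i => ?_⟩
  rw [key, hp, hZ']
  rcases eq_or_ne i (K - 1) with h | h
  · rw [if_pos h, if_pos h, div_self (Real.exp_ne_zero _)]
  · rw [if_neg h, if_neg h, zero_div]
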